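/- The free s-step nilpotent Lie algebra on k ≥ s generators has no nonzero multilinear element of degree s that vanishes identically on the Lie algebra 𝔲_s of strictly upper triangular (s+1)×(s+1) matrices. Equivalently, the canonical evaluation map from the space H_s of multilinear degree-s elements of the free Lie algebra on k generators (in the variables x_1,…,x_s) to the space of s-multilinear bracket maps 𝔲_s^s → 𝔲_s is injective. -/

import Mathlib

/-- A matrix is strictly upper triangular. -/
def IsStrictUpper {s : ℕ} (A : Matrix (Fin (s + 1)) (Fin (s + 1)) ℝ) : Prop :=
  ∀ i j : Fin (s + 1), (j : ℕ) ≤ (i : ℕ) → A i j = 0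

/-- The multilinear bracket monomial `m_σ = [⋯[[x_1, x_{σ(2)}], x_{σ(3)}], …, x_{σ(s)}]` in
the free Lie algebra on `k ≥ s` generators (indices `0`-based). -/
noncomputable def freeLieMonomial (k s : ℕ) (hsk : s ≤ k) (hs : 0 < s)
    (σ : Equiv.Perm (Fin s)) : FreeLieAlgebra ℝ (Fin k) :=
  ((List.finRange s).drop 1).foldl
    (fun acc j => ⁅acc, FreeLieAlgebra.of ℝ (Fin.castLE hsk (σ j))⁆)
    (FreeLieAlgebra.of ℝ (Fin.castLE hsk (σ ⟨0, hs⟩)))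

/-- The space `H_s` of multilinear degree-`s` elements of the free Lie algebra on `k`
generators in the variables `x_1, …, x_s`: the span of the monomials `m_σ`, for `σ` a
permutation of `{1,…,s}` fixing `1`. -/
noncomputable def multilinearComponent (k s : ℕ) (hsk : s ≤ k) (hs : 0 < s) :
    Submodule ℝ (FreeLieAlgebra ℝ (Fin k)) :=
  Submodule.span ℝ (Set.range
    (fun σ : {σ : Equiv.Perm (Fin s) // σ ⟨0, hs⟩ = ⟨0, hs⟩} =>
      freeLieMonomial k s hsk hs σ.1))

attribute [local instance 100] LieRing.ofAssociativeRing

/-- Elementary matrix `E_{a, a+1}`. -/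
def elemMat (s : ℕ) (a : Fin s) : Matrix (Fin (s + 1)) (Fin (s + 1)) ℝ :=
  Matrix.single a.castSucc a.succ 1

lemma foldl_bracket_zero {M : Type*} [LieRing M] {ι : Type*} (g : ι → M) (L : List ι) :
    L.foldl (fun acc b => ⁅acc, g b⁆) 0 = 0 := by
  induction L with
  | nil => rfl
  | cons a L ih => simpa [zero_lie] using ih

lemma bracket_elem {s : ℕ} (q : Fin (s + 1)) (b : Fin s) :
    ⁅Matrix.single (0 : Fin (s + 1)) q (1 : ℝ), elemMat s b⁆
      = if q = b.castSucc then Matrix.single 0 b.succ 1 else 0 := by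
  rw [Ring.lie_def, elemMat,
    Matrix.single_mul_single_of_ne _ _ _ _ (Fin.succ_ne_zero b) 1]
  by_cases hq : q = b.castSucc
  · subst hq
    rw [Matrix.single_mul_single_same, if_pos rfl, one_mul, sub_zero]
  · rw [Matrix.single_mul_single_of_ne _ _ _ _ hq 1, if_neg hq, sub_zero]

lemma fold_elem {s : ℕ} (π : Equiv.Perm (Fin s)) :
    ∀ d j (hjd : j + d = s),
    List.foldl (fun acc b => ⁅acc, elemMat s (π b)⁆)
      (Matrix.single 0 ⟨j, by omega⟩ 1)
      ((List.finRange s).drop j)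
    = if ∀ t : Fin s, j ≤ (t : ℕ) → π t = t
      then Matrix.single 0 ⟨s, s.lt_succ_self⟩ 1 else 0 := by
  intro d
  induction d with
  | zero =>
    intro j hjd
    have hj : j = s := by omega
    subst hj
    rw [List.drop_eq_nil_of_le (by simp), List.foldl_nil, if_pos]
    intro t ht
    exact absurd t.2 (by omega)
  | succ d ih =>
    intro j hjd
    have hjs : j < s := by omega
    rw [List.drop_eq_getElem_cons (by simpa using hjs), List.getElem_finRange]
    simp only [Fin.cast_mk]
    rw [List.foldl_cons, bracket_elem]
    by_cases hπ : π ⟨j, hjs⟩ = ⟨j, hjs⟩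
    · rw [hπ]
      simp only [Fin.castSucc_mk, Fin.succ_mk]
      rw [if_true, ih (j + 1) (by omega)]
      have hcond : (∀ t : Fin s, j + 1 ≤ (t : ℕ) → π t = t)
          ↔ (∀ t : Fin s, j ≤ (t : ℕ) → π t = t) := by
        constructor
        · intro h t ht
          rcases Nat.lt_or_ge (t : ℕ) (j + 1) with h' | h'
          · have : t = ⟨j, hjs⟩ := by ext; simp; omega
            rw [this]
            simpa using hπ
          · exact h t h'
        · intro h t ht; exact h t (by omega)
      simp only [hcond]
    · rw [if_neg, foldl_bracket_zero, if_neg]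
      · intro h
        exact hπ (h ⟨j, hjs⟩ (le_refl j))
      · intro h
        apply hπ
        ext
        have := congrArg (Fin.val) h
        simpa using this.symm

lemma lift_foldl {k s : ℕ} {L' : Type*} [LieRing L'] [LieAlgebra ℝ L']
    (X : Fin k → L') (g : Fin s → Fin k) (z : FreeLieAlgebra ℝ (Fin k))
    (l : List (Fin s)) :
    FreeLieAlgebra.lift ℝ X
        (l.foldl (fun acc j => ⁅acc, FreeLieAlgebra.of ℝ (g j)⁆) z)
      = l.foldl (fun acc j => ⁅acc, X (g j)⁆) (FreeLieAlgebra.lift ℝ X z) := by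
  induction l generalizing z with
  | nil => rfl
  | cons a l ih =>
    rw [List.foldl_cons, List.foldl_cons, ih, LieHom.map_lie,
      FreeLieAlgebra.lift_of_apply]

/-- The evaluation assignment: generator `i` (for `i < s`) goes to `E_{ρ i, ρ i + 1}`. -/
def Xmat (k s : ℕ) (ρ : Equiv.Perm (Fin s)) :
    Fin k → Matrix (Fin (s + 1)) (Fin (s + 1)) ℝ :=
  fun i => if h : (i : ℕ) < s then elemMat s (ρ ⟨i, h⟩) else 0

lemma Xmat_strictUpper (k s : ℕ) (ρ : Equiv.Perm (Fin s)) (i : Fin k) :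
    IsStrictUpper (Xmat k s ρ i) := by
  intro a b hab
  rw [Xmat]
  split
  · rw [elemMat, Matrix.single]
    simp only [Matrix.of_apply]
    rw [if_neg]
    rintro ⟨h1, h2⟩
    have h1' := congrArg Fin.val h1
    have h2' := congrArg Fin.val h2
    simp [Fin.val_succ] at h1' h2'
    omega
  · rfl

lemma eval_monomial (k s : ℕ) (hsk : s ≤ k) (hs : 0 < s)
    (σ ρ : Equiv.Perm (Fin s)) (hσ : σ ⟨0, hs⟩ = ⟨0, hs⟩) (hρ : ρ ⟨0, hs⟩ = ⟨0, hs⟩) :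
    FreeLieAlgebra.lift ℝ (Xmat k s ρ) (freeLieMonomial k s hsk hs σ)
      = if ρ * σ = 1 then Matrix.single 0 ⟨s, s.lt_succ_self⟩ 1 else 0 := by
  rw [freeLieMonomial, lift_foldl]
  have hX : ∀ j : Fin s, Xmat k s ρ (Fin.castLE hsk j) = elemMat s ((ρ * σ) (σ⁻¹ j)) := by
    intro j
    rw [Xmat, dif_pos (by simpa using j.2)]
    have h1 : (⟨((Fin.castLE hsk j : Fin k) : ℕ), by simpa using j.2⟩ : Fin s) = j :=
      Fin.ext rfl
    rw [h1, Equiv.Perm.mul_apply, Equiv.Perm.inv_def, Equiv.apply_symm_apply]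
  simp only [hX, FreeLieAlgebra.lift_of_apply]
  have hstart : (ρ * σ) (σ⁻¹ (σ ⟨0, hs⟩)) = ⟨0, hs⟩ := by
    rw [Equiv.Perm.inv_def, Equiv.symm_apply_apply, Equiv.Perm.mul_apply, hσ, hρ]
  rw [hstart]
  have hstart2 : elemMat s ⟨0, hs⟩ = Matrix.single 0 ⟨1, by omega⟩ 1 := by
    rw [elemMat]
    congr 1 <;> ext <;> simp
  have hfun : (fun (acc : Matrix (Fin (s+1)) (Fin (s+1)) ℝ) (j : Fin s) =>
        ⁅acc, elemMat s ((ρ * σ) (σ⁻¹ (σ j)))⁆)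
      = fun acc j => ⁅acc, elemMat s ((ρ * σ) j)⁆ := by
    funext acc j
    rw [Equiv.Perm.inv_def, Equiv.symm_apply_apply]
  rw [hstart2, hfun, fold_elem (ρ * σ) (s - 1) 1 (by omega)]
  have hπ0 : (ρ * σ) ⟨0, hs⟩ = ⟨0, hs⟩ := by
    rw [Equiv.Perm.mul_apply, hσ, hρ]
  have hcond : (∀ t : Fin s, 1 ≤ (t : ℕ) → (ρ * σ) t = t) ↔ ρ * σ = 1 := by
    constructor
    · intro h
      ext t
      rcases Nat.eq_zero_or_pos (t : ℕ) with h' | h'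
      · have : t = ⟨0, hs⟩ := by ext; simpa using h'
        rw [this]
        simpa using congrArg Fin.val hπ0
      · simpa using congrArg Fin.val (h t h')
    · intro h t _
      rw [h]
      rfl
  simp only [hcond]

/-- The free Lie algebra on `k ≥ s` generators has no nonzero multilinear element of degree
`s` vanishing identically on the Lie algebra `𝔲_s` of strictly upper triangular
`(s+1)×(s+1)` real matrices: the evaluation map on `H_s` is injective. -/
theorem no_multilinear_law_of_strictly_upper_triangular
    (k s : ℕ) (hsk : s ≤ k) (hs : 0 < s)
    (r : FreeLieAlgebra ℝ (Fin k)) (hr : r ∈ multilinearComponent k s hsk hs)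
    (hvanish : ∀ X : Fin k → Matrix (Fin (s + 1)) (Fin (s + 1)) ℝ,
      (∀ i, IsStrictUpper (X i)) → (FreeLieAlgebra.lift ℝ X) r = 0) :
    r = 0 := by
  rw [multilinearComponent] at hr
  obtain ⟨c, hc⟩ := (Submodule.mem_span_range_iff_exists_fun ℝ).mp hr
  have hcoef : ∀ τ : {σ : Equiv.Perm (Fin s) // σ ⟨0, hs⟩ = ⟨0, hs⟩}, c τ = 0 := by
    intro τ
    have hρ0 : (τ.1)⁻¹ ⟨0, hs⟩ = ⟨0, hs⟩ :=
      Equiv.Perm.inv_eq_iff_eq.mpr τ.2.symm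
    have h0 := hvanish (Xmat k s (τ.1)⁻¹) (Xmat_strictUpper k s (τ.1)⁻¹)
    rw [← hc] at h0
    rw [show (FreeLieAlgebra.lift ℝ (Xmat k s (τ.1)⁻¹))
          (∑ i : {σ : Equiv.Perm (Fin s) // σ ⟨0, hs⟩ = ⟨0, hs⟩},
            c i • freeLieMonomial k s hsk hs i.1)
        = ∑ i : {σ : Equiv.Perm (Fin s) // σ ⟨0, hs⟩ = ⟨0, hs⟩},
            (FreeLieAlgebra.lift ℝ (Xmat k s (τ.1)⁻¹))
              (c i • freeLieMonomial k s hsk hs i.1) by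
      rw [← LieHom.coe_toLinearMap, map_sum]] at h0
    have heval : ∀ σ : {σ : Equiv.Perm (Fin s) // σ ⟨0, hs⟩ = ⟨0, hs⟩},
        FreeLieAlgebra.lift ℝ (Xmat k s (τ.1)⁻¹) (c σ • freeLieMonomial k s hsk hs σ.1)
          = if σ = τ then c σ • Matrix.single 0 ⟨s, s.lt_succ_self⟩ 1 else 0 := by
      intro σ
      rw [map_smul, eval_monomial k s hsk hs σ.1 (τ.1)⁻¹ σ.2 hρ0]
      by_cases hστ : σ = τ
      · rw [if_pos (by rw [hστ]; exact inv_mul_cancel _), if_pos hστ]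
      · rw [if_neg, if_neg hστ, smul_zero]
        intro h
        exact hστ (Subtype.ext (inv_mul_eq_one.mp h).symm)
    rw [Finset.sum_congr rfl (fun σ _ => heval σ)] at h0
    simp only [Finset.sum_ite_eq', Finset.mem_univ, if_true] at h0
    have hE : (Matrix.single (0 : Fin (s + 1)) (⟨s, s.lt_succ_self⟩ : Fin (s + 1)) (1 : ℝ)) ≠ 0 := by
      intro h
      have := congrFun (congrFun h 0) (⟨s, s.lt_succ_self⟩ : Fin (s + 1))
      simp [Matrix.single] at this
    rcases smul_eq_zero.mp h0 with h | h
    · exact h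
    · exact absurd h hE
  rw [← hc]
  simp [hcoef]
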